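/- Let p be prime and Ā a finite set of nonnegative integers with polynomial Ā(x). Then the set S_{pĀ} of prime powers s with Φ_s(x) dividing Ā(x^p) equals {p^{α+1} : p^α ∈ S_Ā} ∪ {q^β ∈ S_Ā : q prime, q ≠ p}. -/

import Mathlib

open Polynomial

/-- The polynomial `∑_{a ∈ A} x^a` of a finite set of nonnegative integers. -/
noncomputable def setPoly (A : Finset ℕ) : Polynomial ℤ :=
  ∑ a ∈ A, X ^ a

lemma cyclo_dvd_iff_aeval {n : ℕ} (hn : 0 < n) {ζ : ℂ} (hζ : IsPrimitiveRoot ζ n)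
    (f : Polynomial ℤ) : cyclotomic n ℤ ∣ f ↔ aeval ζ f = 0 := by
  rw [cyclotomic_eq_minpoly hζ hn]
  exact (minpoly.isIntegrallyClosed_dvd_iff (hζ.isIntegral hn) f).symm

lemma aeval_comp_pow (f : Polynomial ℤ) (p : ℕ) (ζ : ℂ) :
    aeval ζ (f.comp (X ^ p)) = aeval (ζ ^ p) f := by
  simp [aeval_comp]

lemma aeval_one_setPoly (A : Finset ℕ) :
    aeval (1 : ℂ) (setPoly A) = (A.card : ℂ) := by
  simp [setPoly]

theorem S_of_p_smul (p : ℕ) (hp : p.Prime) (Abar : Finset ℕ)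
    (hAbar : Abar.Nonempty)
    (SA : Set ℕ) (hSA : SA = {s : ℕ | IsPrimePow s ∧ cyclotomic s ℤ ∣ setPoly Abar}) :
    {s : ℕ | IsPrimePow s ∧ cyclotomic s ℤ ∣ (setPoly Abar).comp (X ^ p)} =
      {s : ℕ | ∃ α : ℕ, p ^ α ∈ SA ∧ s = p ^ (α + 1)} ∪
      {s : ℕ | s ∈ SA ∧ ∃ q β : ℕ, q.Prime ∧ q ≠ p ∧ s = q ^ β} := by
  subst hSA
  ext s
  simp only [Set.mem_setOf_eq, Set.mem_union]
  constructor
  · rintro ⟨hs, hdvd⟩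
    obtain ⟨q, k, hq, hk, rfl⟩ := hs
    have hq' : q.Prime := hq.nat_prime
    have hpos : 0 < q ^ k := pow_pos hq'.pos k
    obtain ⟨ζ, hζ⟩ : ∃ ζ : ℂ, IsPrimitiveRoot ζ (q ^ k) :=
      ⟨_, Complex.isPrimitiveRoot_exp _ hpos.ne'⟩
    have hz : aeval (ζ ^ p) (setPoly Abar) = 0 := by
      rw [← aeval_comp_pow]
      exact ((cyclo_dvd_iff_aeval hpos hζ _).mp hdvd)
    by_cases hqp : q = p
    · subst hqp
      -- ζ^q is a primitive q^(k-1)-root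
      have hk1 : q ^ k = q * q ^ (k - 1) := by
        rw [← pow_succ']
        congr 1
        omega
      have hprim : IsPrimitiveRoot (ζ ^ q) (q ^ (k - 1)) := hζ.pow hpos hk1
      have hdvd' : cyclotomic (q ^ (k - 1)) ℤ ∣ setPoly Abar :=
        (cyclo_dvd_iff_aeval (pow_pos hq'.pos _) hprim _).mpr hz
      have hk2 : 2 ≤ k := by
        by_contra h
        have hk1' : k = 1 := by omega
        have : (ζ ^ q) = 1 := by
          simpa [hk1'] using hprim.pow_eq_one
        rw [this, aeval_one_setPoly] at hz
        exact_mod_cast (Nat.cast_ne_zero (R := ℂ)).mpr hAbar.card_ne_zero hz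
      left
      refine ⟨k - 1, ⟨⟨q, k - 1, hq, by omega, rfl⟩, hdvd'⟩, ?_⟩
      congr 1
      omega
    · right
      have hcop : Nat.Coprime p (q ^ k) :=
        (Nat.Coprime.pow_right k ((Nat.coprime_primes hp hq').mpr (Ne.symm hqp)))
      have hprim : IsPrimitiveRoot (ζ ^ p) (q ^ k) := hζ.pow_of_coprime p hcop
      exact ⟨⟨⟨q, k, hq, hk, rfl⟩, (cyclo_dvd_iff_aeval hpos hprim _).mpr hz⟩,
        q, k, hq', hqp, rfl⟩
  · rintro (⟨α, ⟨hpp, hdvd⟩, rfl⟩ | ⟨⟨hs, hdvd⟩, q, β, hq, hqp, rfl⟩)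
    · have hpos : 0 < p ^ (α + 1) := pow_pos hp.pos _
      obtain ⟨ζ, hζ⟩ : ∃ ζ : ℂ, IsPrimitiveRoot ζ (p ^ (α + 1)) :=
        ⟨_, Complex.isPrimitiveRoot_exp _ hpos.ne'⟩
      have hprim : IsPrimitiveRoot (ζ ^ p) (p ^ α) := hζ.pow hpos (by rw [pow_succ'])
      refine ⟨⟨p, α + 1, hp.prime, Nat.succ_pos _, rfl⟩, ?_⟩
      rw [cyclo_dvd_iff_aeval hpos hζ, aeval_comp_pow]
      exact (cyclo_dvd_iff_aeval (pow_pos hp.pos _) hprim _).mp hdvd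
    · have hβ : 0 < β := by
        rcases Nat.eq_zero_or_pos β with h | h
        · exfalso
          rw [h, pow_zero] at hs
          exact (not_isPrimePow_one) hs
        · exact h
      have hpos : 0 < q ^ β := pow_pos hq.pos _
      obtain ⟨ζ, hζ⟩ : ∃ ζ : ℂ, IsPrimitiveRoot ζ (q ^ β) :=
        ⟨_, Complex.isPrimitiveRoot_exp _ hpos.ne'⟩
      have hcop : Nat.Coprime p (q ^ β) :=
        (Nat.Coprime.pow_right β ((Nat.coprime_primes hp hq).mpr (Ne.symm hqp)))
      have hprim : IsPrimitiveRoot (ζ ^ p) (q ^ β) := hζ.pow_of_coprime p hcop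
      refine ⟨hs, ?_⟩
      rw [cyclo_dvd_iff_aeval hpos hζ, aeval_comp_pow]
      exact (cyclo_dvd_iff_aeval hpos hprim _).mp hdvd
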